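/- arXiv:1712.07640 — 5 statements merged into one kernel-verified Lean document; each statement's English description precedes it below -/
import Mathlib

section
/- Let 0 < r < 1, 0 < θr < 1, F > 0, and let H, α, β, τ, Γ be real. Then the derivative f'(1) of the replicator right-hand side f at the all-selective equilibrium x = 1 is negative (i.e., a population of selective poachers is evolutionarily stable) if and only if τ > (1/(1 − r^(N_r − 1))) · (F + H·θr·(1−r)^(1−α−β) − Γ·(1−r)^(1−β)/r)/F. -/
/-- A population of selective poachers is evolutionarily stable (the derivative of the
replicator right-hand side at the all-selective equilibrium `x = 1` is negative) if and
only if the time-to-kill `τ` exceeds the stated threshold. -/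
theorem selective_stability_iff
    (r θr F H α β τ Γ : ℝ)
    (hr0 : 0 < r) (hr1 : r < 1) (hθr0 : 0 < θr) (hθr1 : θr < 1) (hF : 0 < F) :
    let Nr : ℕ := ⌈1 / θr⌉₊
    let θ : ℝ → ℝ := fun x => x * (1 - r) + (1 - x) * (1 - r + r * θr)
    let u1 : ℝ → ℝ := fun x =>
      (1 - r) * H * θ x ^ (-α) - (r + τ * (1 - r)) * F * (1 - r) ^ (β - 1)
    let u2 : ℝ → ℝ := fun x =>
      (1 - r + r * θr) * H * θ x ^ (-α) - τ * (1 - r ^ Nr) * F * (1 - r) ^ (β - 1) - Γ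
    let f : ℝ → ℝ := fun x => x * (1 - x) * (u1 x - u2 x)
    deriv f 1 < 0 ↔
      τ > 1 / (1 - r ^ (Nr - 1)) *
        ((F + H * θr * (1 - r) ^ (1 - α - β) - Γ * (1 - r) ^ (1 - β) / r) / F) := by
  intro Nr θ u1 u2 f
  have hA : (0:ℝ) < 1 - r := by linarith
  have hθ1 : θ 1 = 1 - r := by show (1:ℝ) * (1 - r) + (1 - 1) * (1 - r + r * θr) = 1 - r; ring
  -- derivative of θ
  have hθd : HasDerivAt θ ((1 : ℝ) * (1 - r) + (0 - 1) * (1 - r + r * θr)) 1 :=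
    ((hasDerivAt_id 1).mul_const (1 - r)).add
      (((hasDerivAt_const 1 (1:ℝ)).sub (hasDerivAt_id 1)).mul_const (1 - r + r * θr))
  have hp : HasDerivAt (fun x => θ x ^ (-α))
      (((1 : ℝ) * (1 - r) + (0 - 1) * (1 - r + r * θr)) * (-α) * θ 1 ^ (-α - 1)) 1 :=
    hθd.rpow_const (Or.inl (by rw [hθ1]; exact ne_of_gt hA))
  set D : ℝ := ((1 : ℝ) * (1 - r) + (0 - 1) * (1 - r + r * θr)) * (-α) * θ 1 ^ (-α - 1) with hD
  have hu1 : HasDerivAt u1 ((1 - r) * H * D) 1 :=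
    (hp.const_mul ((1 - r) * H)).sub_const _
  have hu2 : HasDerivAt u2 ((1 - r + r * θr) * H * D) 1 := by
    exact (((hp.const_mul ((1 - r + r * θr) * H)).sub_const _).sub_const _)
  have hg : HasDerivAt (fun x => u1 x - u2 x)
      ((1 - r) * H * D - (1 - r + r * θr) * H * D) 1 := hu1.sub hu2
  have hq : HasDerivAt (fun x : ℝ => x * (1 - x)) ((1:ℝ) * (1 - 1) + 1 * (0 - 1)) 1 :=
    (hasDerivAt_id 1).mul ((hasDerivAt_const 1 (1:ℝ)).sub (hasDerivAt_id 1))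
  have hfd : HasDerivAt f
      (((1:ℝ) * (1 - 1) + 1 * (0 - 1)) * (u1 1 - u2 1)
        + 1 * (1 - 1) * ((1 - r) * H * D - (1 - r + r * θr) * H * D)) 1 := hq.mul hg
  have hderiv : deriv f 1 = -(u1 1 - u2 1) := by rw [hfd.deriv]; ring
  rw [hderiv]
  -- notation for powers
  set P : ℝ := (1 - r) ^ (-α) with hP
  set Q : ℝ := (1 - r) ^ (β - 1) with hQ
  have hQ0 : 0 < Q := Real.rpow_pos_of_pos hA _
  have hu1v : u1 1 = (1 - r) * H * P - (r + τ * (1 - r)) * F * Q := by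
    show (1 - r) * H * θ 1 ^ (-α) - _ = _
    rw [hθ1]
  have hu2v : u2 1 = (1 - r + r * θr) * H * P - τ * (1 - r ^ Nr) * F * Q - Γ := by
    show (1 - r + r * θr) * H * θ 1 ^ (-α) - _ - _ = _
    rw [hθ1]
  rw [hu1v, hu2v]
  -- rpow identities
  have hPQ : (1 - r) ^ (1 - α - β) = P * Q⁻¹ := by
    rw [hP, hQ, ← Real.rpow_neg hA.le, ← Real.rpow_add hA]
    ring_nf
  have hQi : (1 - r) ^ (1 - β) = Q⁻¹ := by
    rw [hQ, ← Real.rpow_neg hA.le]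
    ring_nf
  rw [hPQ, hQi]
  -- Nr ≥ 2
  have hNr2 : 2 ≤ Nr := by
    have : (1:ℝ) < 1 / θr := (one_lt_div hθr0).2 hθr1
    have := Nat.lt_ceil.2 (by exact_mod_cast this : ((1:ℕ):ℝ) < 1 / θr)
    omega
  set M : ℝ := 1 - r ^ (Nr - 1) with hM
  have hM0 : 0 < M := by
    have : r ^ (Nr - 1) < 1 := pow_lt_one₀ hr0.le hr1 (by omega)
    linarith
  have hK : 0 < r * F * Q * M := by positivity
  have hrNr : r ^ Nr = r * r ^ (Nr - 1) := by
    rw [← pow_succ']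
    congr 1
    omega
  have hthr : 1 / M * ((F + H * θr * (P * Q⁻¹) - Γ * Q⁻¹ / r) / F)
      = (r * θr * H * P + r * F * Q - Γ) / (r * F * Q * M) := by
    field_simp
    ring
  rw [hthr, gt_iff_lt, div_lt_iff₀ hK]
  have key : -((1 - r) * H * P - (r + τ * (1 - r)) * F * Q -
      ((1 - r + r * θr) * H * P - τ * (1 - r ^ Nr) * F * Q - Γ))
      = (r * θr * H * P + r * F * Q - Γ) - τ * (r * F * Q * M) := by
    rw [hrNr, hM]; ring
  rw [key, sub_neg]
end

section
/- Let 0 < r < 1, 0 < θr < 1, and let H, α, F, β, τ, Γ be real. Then the function f(x) := x(1−x)(u1(x)−u2(x)) has derivative at x = 1 equal to J(1) = H·r·θr·(1−r)^(−α) + F·(1−r)^(β−1)·(r − τ·(r − r^(N_r))) − Γ. -/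
/-- The replicator right-hand side `f(x) = x(1-x)(u1(x) - u2(x))` has derivative at the
all-selective equilibrium `x = 1` equal to
`J(1) = H r θr (1-r)^(-α) + F (1-r)^(β-1) (r - τ (r - r^{N_r})) - Γ`. -/
theorem deriv_at_one
    (r θr H α F β τ Γ : ℝ)
    (hr0 : 0 < r) (hr1 : r < 1) (hθr0 : 0 < θr) (hθr1 : θr < 1) :
    let Nr : ℕ := ⌈1 / θr⌉₊
    let θ : ℝ → ℝ := fun x => x * (1 - r) + (1 - x) * (1 - r + r * θr)
    let u1 : ℝ → ℝ := fun x =>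
      (1 - r) * H * θ x ^ (-α) - (r + τ * (1 - r)) * F * (1 - r) ^ (β - 1)
    let u2 : ℝ → ℝ := fun x =>
      (1 - r + r * θr) * H * θ x ^ (-α) - τ * (1 - r ^ Nr) * F * (1 - r) ^ (β - 1) - Γ
    let f : ℝ → ℝ := fun x => x * (1 - x) * (u1 x - u2 x)
    HasDerivAt f
      (H * r * θr * (1 - r) ^ (-α) + F * (1 - r) ^ (β - 1) * (r - τ * (r - r ^ Nr)) - Γ)
      1 := by
  intro Nr θ u1 u2 f
  have hθ1 : θ 1 = 1 - r := by simp [θ]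
  have hθne : θ 1 ≠ 0 := by rw [hθ1]; linarith
  have hθd : HasDerivAt θ (-(r * θr)) 1 := by
    have h : HasDerivAt (fun x : ℝ => x * (1 - r) + (1 - x) * (1 - r + r * θr))
        (1 * (1 - r) + (0 - 1) * (1 - r + r * θr)) 1 := by
      exact ((hasDerivAt_id 1).mul_const _).add
        (((hasDerivAt_const 1 (1:ℝ)).sub (hasDerivAt_id 1)).mul_const _)
    convert h using 1
    ring
  have hpow : HasDerivAt (fun x => θ x ^ (-α)) (-(r * θr) * (-α) * θ 1 ^ (-α - 1)) 1 :=
    hθd.rpow_const (Or.inl hθne)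
  have hg : HasDerivAt (fun x => u1 x - u2 x)
      ((1 - r) * H * (-(r * θr) * (-α) * θ 1 ^ (-α - 1)) -
        (1 - r + r * θr) * H * (-(r * θr) * (-α) * θ 1 ^ (-α - 1))) 1 := by
    have h1 : HasDerivAt u1 ((1 - r) * H * (-(r * θr) * (-α) * θ 1 ^ (-α - 1))) 1 :=
      (hpow.const_mul _).sub_const _
    have h2 : HasDerivAt u2 ((1 - r + r * θr) * H * (-(r * θr) * (-α) * θ 1 ^ (-α - 1))) 1 :=
      ((hpow.const_mul _).sub_const _).sub_const _
    exact h1.sub h2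
  have hp : HasDerivAt (fun x : ℝ => x * (1 - x)) (-1 : ℝ) 1 := by
    have h : HasDerivAt (fun x : ℝ => x * (1 - x)) (1 * (1 - 1) + 1 * (0 - 1)) 1 :=
      (hasDerivAt_id 1).mul ((hasDerivAt_const 1 (1:ℝ)).sub (hasDerivAt_id 1))
    convert h using 1
    ring
  have hf : HasDerivAt (fun x => x * (1 - x) * (u1 x - u2 x)) _ 1 := hp.mul hg
  convert hf using 1
  simp only [u1, u2, hθ1, f]
  ring
end

section
/- Let 0 < θr < 1, F > 0, H ≥ 0, and let α, β be real, and set Γ = 0. Then the right-hand side of the selective-stability threshold, R(r) := (1/(1 − r^(N_r − 1))) · (F + H·θr·(1−r)^(1−α−β))/F, tends to +∞ as r → 1 from the left (i.e., along the filter of reals less than 1 tending to 1). Consequently, devaluing all rhinos (r → 1) makes the selective-stability condition τ > R(r) impossible to satisfy for any fixed τ. -/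
/-- With `Γ = 0`, the selective-stability threshold
`R(r) = (1/(1 - r^(N_r - 1))) (F + H θr (1-r)^(1-α-β))/F` tends to `+∞` as `r → 1⁻`.
Hence devaluing all rhinos makes the condition `τ > R(r)` impossible for any fixed `τ`. -/
theorem threshold_tendsto_atTop
    (θr F H α β : ℝ) (hθr0 : 0 < θr) (hθr1 : θr < 1) (hF : 0 < F) (hH : 0 ≤ H) :
    let Nr : ℕ := ⌈1 / θr⌉₊
    Filter.Tendsto
      (fun r : ℝ => 1 / (1 - r ^ (Nr - 1)) * ((F + H * θr * (1 - r) ^ (1 - α - β)) / F))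
      (nhdsWithin 1 (Set.Iio 1)) Filter.atTop := by
  intro Nr
  have hNr : 1 < Nr := by
    have h1 : (1:ℝ) < 1 / θr := one_lt_one_div hθr0 hθr1
    have : ((1:ℕ):ℝ) < 1 / θr := by exact_mod_cast h1
    exact Nat.lt_ceil.mpr this
  set n := Nr - 1 with hn
  have hn0 : n ≠ 0 := by omega
  have hIoo : Set.Ioo (0:ℝ) 1 ∈ nhdsWithin 1 (Set.Iio 1) := by
    have h1 : Set.Ioi (0:ℝ) ∈ nhds (1:ℝ) := Ioi_mem_nhds (by norm_num)
    have h2 : Set.Iio (1:ℝ) ∈ nhdsWithin (1:ℝ) (Set.Iio 1) := self_mem_nhdsWithin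
    have := Filter.inter_mem (nhdsWithin_le_nhds h1) h2
    simpa [Set.Ioi_inter_Iio] using this
  have hf : Filter.Tendsto (fun r : ℝ => 1 / (1 - r ^ n))
      (nhdsWithin 1 (Set.Iio 1)) Filter.atTop := by
    simp only [one_div]
    apply Filter.Tendsto.inv_tendsto_nhdsGT_zero
    apply tendsto_nhdsWithin_of_tendsto_nhds_of_eventually_within
    · have : Filter.Tendsto (fun r : ℝ => 1 - r ^ n) (nhds 1) (nhds (1 - 1 ^ n)) :=
        (tendsto_const_nhds.sub ((continuous_pow n).tendsto 1))
      simpa using this.mono_left nhdsWithin_le_nhds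
    · filter_upwards [hIoo] with r hr
      have : r ^ n < 1 := pow_lt_one₀ hr.1.le hr.2 hn0
      simpa [Set.mem_Ioi] using sub_pos.mpr this
  apply Filter.tendsto_atTop_mono' _ _ hf
  filter_upwards [hIoo] with r hr
  have hpos : (0:ℝ) < 1 - r ^ n := sub_pos.mpr (pow_lt_one₀ hr.1.le hr.2 hn0)
  have hfpos : 0 ≤ 1 / (1 - r ^ n) := by positivity
  have hrpow : (0:ℝ) ≤ H * θr * (1 - r) ^ (1 - α - β) := by
    have : (0:ℝ) < 1 - r := sub_pos.mpr hr.2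
    positivity
  have hg : (1:ℝ) ≤ (F + H * θr * (1 - r) ^ (1 - α - β)) / F := by
    rw [le_div_iff₀ hF]
    linarith
  calc 1 / (1 - r ^ n) = 1 / (1 - r ^ n) * 1 := (mul_one _).symm
    _ ≤ 1 / (1 - r ^ n) * ((F + H * θr * (1 - r) ^ (1 - α - β)) / F) :=
        mul_le_mul_of_nonneg_left hg hfpos
end

section
/- Let 0 < r < 1, 0 < θr < 1, F > 0, and let H, α, β, τ, Γ be real. Then the derivative f'(0) of the replicator right-hand side f at the all-indiscriminate equilibrium x = 0 is negative (i.e., a population of indiscriminate poachers is evolutionarily stable) if and only if τ < (1/(1 − r^(N_r − 1))) · (F + H·θr·(1−r)^(1−β)·(1−r+r·θr)^(−α) − Γ·(1−r)^(1−β)/r)/F. -/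
/-- A population of indiscriminate poachers is evolutionarily stable (the derivative of
the replicator right-hand side at the all-indiscriminate equilibrium `x = 0` is negative)
if and only if the time-to-kill `τ` is below the stated threshold. -/
theorem indiscriminate_stability_iff
    (r θr F H α β τ Γ : ℝ)
    (hr0 : 0 < r) (hr1 : r < 1) (hθr0 : 0 < θr) (hθr1 : θr < 1) (hF : 0 < F) :
    let Nr : ℕ := ⌈1 / θr⌉₊
    let θ : ℝ → ℝ := fun x => x * (1 - r) + (1 - x) * (1 - r + r * θr)
    let u1 : ℝ → ℝ := fun x =>
      (1 - r) * H * θ x ^ (-α) - (r + τ * (1 - r)) * F * (1 - r) ^ (β - 1)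
    let u2 : ℝ → ℝ := fun x =>
      (1 - r + r * θr) * H * θ x ^ (-α) - τ * (1 - r ^ Nr) * F * (1 - r) ^ (β - 1) - Γ
    let f : ℝ → ℝ := fun x => x * (1 - x) * (u1 x - u2 x)
    deriv f 0 < 0 ↔
      τ < 1 / (1 - r ^ (Nr - 1)) *
        ((F + H * θr * (1 - r) ^ (1 - β) * (1 - r + r * θr) ^ (-α) -
            Γ * (1 - r) ^ (1 - β) / r) / F) := by
  intro Nr θ u1 u2 f
  have hd : (0:ℝ) < 1 - r := by linarith
  have hc : (0:ℝ) < 1 - r + r * θr := by nlinarith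
  have hθ0 : θ 0 = 1 - r + r * θr := by simp [θ]
  -- Nr ≥ 2
  have hNr : 1 < Nr := by
    have h1 : (1:ℝ) < 1 / θr := by rw [lt_div_iff₀ hθr0]; linarith
    rw [Nat.lt_ceil]
    exact_mod_cast h1
  have hmN : Nr = (Nr - 1) + 1 := (Nat.succ_pred_eq_of_pos (by omega)).symm
  set m : ℕ := Nr - 1 with hm
  set A : ℝ := (1 - r + r * θr) ^ (-α) with hA
  set D : ℝ := (1 - r) ^ (β - 1) with hD
  set E : ℝ := (1 - r) ^ (1 - β) with hE
  have hDpos : 0 < D := Real.rpow_pos_of_pos hd _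
  have hApos : 0 < A := Real.rpow_pos_of_pos hc _
  have hE' : E = D⁻¹ := by
    rw [hE, hD, ← Real.rpow_neg hd.le, neg_sub]
  have hKpos : 0 < 1 - r ^ m := by
    have : r ^ m < 1 := pow_lt_one₀ hr0.le hr1 (by omega)
    linarith
  set K : ℝ := 1 - r ^ m with hK
  -- derivative computation
  have hθd : HasDerivAt θ ((1 - r) - (1 - r + r * θr)) 0 := by
    have h := ((hasDerivAt_id (0:ℝ)).mul_const (1-r)).add
      (((hasDerivAt_const (0:ℝ) (1:ℝ)).sub (hasDerivAt_id 0)).mul_const (1 - r + r * θr))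
    rw [show (1 - r) - (1 - r + r * θr) = 1 * (1 - r) + (0 - 1) * (1 - r + r * θr) by ring]
    exact h
  have hrp : HasDerivAt (fun x => θ x ^ (-α))
      (((1 - r) - (1 - r + r * θr)) * (-α) * θ 0 ^ (-α - 1)) 0 :=
    hθd.rpow_const (Or.inl (by rw [hθ0]; exact hc.ne'))
  set g' : ℝ := ((1 - r) - (1 - r + r * θr)) * (-α) * θ 0 ^ (-α - 1)
  have hu1 : HasDerivAt u1 ((1 - r) * H * g') 0 := by
    have := (hrp.const_mul ((1 - r) * H)).sub_const ((r + τ * (1 - r)) * F * (1 - r) ^ (β - 1))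
    simpa [u1, mul_assoc] using this
  have hu2 : HasDerivAt u2 ((1 - r + r * θr) * H * g') 0 := by
    have := ((hrp.const_mul ((1 - r + r * θr) * H)).sub_const
      (τ * (1 - r ^ Nr) * F * (1 - r) ^ (β - 1))).sub_const Γ
    simpa [u2, mul_assoc] using this
  have hg : HasDerivAt (fun x => u1 x - u2 x) ((1 - r) * H * g' - (1 - r + r * θr) * H * g') 0 :=
    hu1.sub hu2
  have hP : HasDerivAt (fun x : ℝ => x * (1 - x)) (1 * (1 - 0) + 0 * (0 - 1)) 0 :=
    (hasDerivAt_id 0).mul ((hasDerivAt_const (0:ℝ) (1:ℝ)).sub (hasDerivAt_id 0))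
  have hfd : deriv f 0 = u1 0 - u2 0 := by
    have h := (hP.mul hg).deriv
    simpa [f, Pi.mul_def] using h
  rw [hfd]
  -- algebra
  have hu10 : u1 0 = (1 - r) * H * A - (r + τ * (1 - r)) * F * D := by
    simp [u1, hθ0, hA, hD]
  have hu20 : u2 0 = (1 - r + r * θr) * H * A - τ * (1 - r ^ Nr) * F * D - Γ := by
    simp [u2, hθ0, hA, hD]
  rw [hu10, hu20]
  have hrN : r ^ Nr = r ^ m * r := by rw [hmN]; ring
  have hden : 0 < r * K * F * D := by positivity
  have hRHS : 1 / K * ((F + H * θr * E * A - Γ * E / r) / F)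
      = (r * F * D + r * θr * H * A - Γ) / (r * K * F * D) := by
    rw [hE']
    field_simp
  rw [hRHS, lt_div_iff₀ hden]
  have key : ((1 - r) * H * A - (r + τ * (1 - r)) * F * D -
      ((1 - r + r * θr) * H * A - τ * (1 - r ^ Nr) * F * D - Γ)) =
      τ * (r * K * F * D) - (r * F * D + r * θr * H * A - Γ) := by
    rw [hrN, hK]; ring
  rw [key]
  exact sub_neg
end

section
/- Let 0 < θr < 1, F > 0, H ≥ 0, and fix real α, β, τ, and Γ = 0. Then there exists r₀ ∈ (0,1) such that for every r with r₀ < r < 1, the selective-stability condition fails: the derivative at x = 1 of the replicator right-hand side f_r (which depends on r) satisfies f_r'(1) ≥ 0. In particular, full devaluation of all rhinos cannot sustain a stable population of selective poachers. -/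
/-- With `Γ = 0`, there exists `r₀ ∈ (0,1)` such that for every `r ∈ (r₀, 1)` the
selective-stability condition fails: the derivative at `x = 1` of the replicator
right-hand side `f_r` is nonnegative. Full devaluation of all rhinos cannot sustain a
stable population of selective poachers. -/
theorem full_devaluation_unstable
    (θr F H α β τ : ℝ) (hθr0 : 0 < θr) (hθr1 : θr < 1) (hF : 0 < F) (hH : 0 ≤ H) :
    ∃ r₀ ∈ Set.Ioo (0 : ℝ) 1, ∀ r : ℝ, r₀ < r → r < 1 →
      deriv
        (fun x : ℝ => x * (1 - x) *
          (((1 - r) * H * (x * (1 - r) + (1 - x) * (1 - r + r * θr)) ^ (-α) -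
              (r + τ * (1 - r)) * F * (1 - r) ^ (β - 1)) -
            ((1 - r + r * θr) * H * (x * (1 - r) + (1 - x) * (1 - r + r * θr)) ^ (-α) -
              τ * (1 - r ^ (⌈1 / θr⌉₊ : ℕ)) * F * (1 - r) ^ (β - 1))))
        1 ≥ 0 := by
  set N : ℕ := ⌈1 / θr⌉₊ with hN
  have hN1 : 1 ≤ N := Nat.one_le_iff_ne_zero.mpr (by
    simp [hN, Nat.ceil_eq_zero, not_le]
    positivity)
  set c : ℝ := (|τ| + 1) * N with hc
  have hc0 : 0 < c := by
    have : (1:ℝ) ≤ (N:ℝ) := by exact_mod_cast hN1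
    have := abs_nonneg τ
    nlinarith
  refine ⟨max (1/2) (1 - 1/(2*c)), ⟨by positivity, ?_⟩, ?_⟩
  · apply max_lt (by norm_num)
    have : 0 < 1/(2*c) := by positivity
    linarith
  intro r hr0 hr1
  have hrhalf : (1:ℝ)/2 < r := lt_of_le_of_lt (le_max_left _ _) hr0
  have hrpos : 0 < r := by linarith
  have h1r : 0 < 1 - r := by linarith
  have hrc : 1 - 1/(2*c) < r := lt_of_le_of_lt (le_max_right _ _) hr0
  -- derivative of the inner affine map
  have hθ : HasDerivAt (fun x : ℝ => x * (1 - r) + (1 - x) * (1 - r + r * θr))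
      (1 * (1 - r) + -1 * (1 - r + r * θr)) 1 :=
    ((hasDerivAt_id (1:ℝ)).mul_const (1 - r)).add
      (((hasDerivAt_id (1:ℝ)).const_sub 1).mul_const (1 - r + r * θr))
  have hθval : (fun x : ℝ => x * (1 - r) + (1 - x) * (1 - r + r * θr)) 1 = 1 - r := by
    simp
  have hne : (fun x : ℝ => x * (1 - r) + (1 - x) * (1 - r + r * θr)) 1 ≠ 0 := by
    rw [hθval]; exact ne_of_gt h1r
  have hA := hθ.rpow_const (p := -α) (Or.inl hne)
  set D : ℝ := (1 * (1 - r) + -1 * (1 - r + r * θr)) * (-α) *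
      ((fun x : ℝ => x * (1 - r) + (1 - x) * (1 - r + r * θr)) 1) ^ (-α - 1) with hD
  have hg : HasDerivAt (fun x : ℝ =>
      ((1 - r) * H * (x * (1 - r) + (1 - x) * (1 - r + r * θr)) ^ (-α) -
          (r + τ * (1 - r)) * F * (1 - r) ^ (β - 1)) -
        ((1 - r + r * θr) * H * (x * (1 - r) + (1 - x) * (1 - r + r * θr)) ^ (-α) -
          τ * (1 - r ^ N) * F * (1 - r) ^ (β - 1)))
      ((1 - r) * H * D - (1 - r + r * θr) * H * D) 1 := by
    exact ((hA.const_mul ((1 - r) * H)).sub_const ((r + τ * (1 - r)) * F * (1 - r) ^ (β - 1))).sub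
      ((hA.const_mul ((1 - r + r * θr) * H)).sub_const (τ * (1 - r ^ N) * F * (1 - r) ^ (β - 1)))
  have hx1 : HasDerivAt (fun x : ℝ => x * (1 - x)) (1 * (1 - 1) + 1 * -1) 1 :=
    (hasDerivAt_id (1:ℝ)).mul ((hasDerivAt_id (1:ℝ)).const_sub 1)
  have hf := hx1.mul hg
  simp only [Pi.mul_def] at hf
  rw [hf.deriv]
  -- now a pure inequality
  have hP : (0:ℝ) < (1 - r) ^ (-α) := Real.rpow_pos_of_pos h1r _
  have hQ : (0:ℝ) < (1 - r) ^ (β - 1) := Real.rpow_pos_of_pos h1r _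
  have hrN : r ^ N ≤ r := pow_le_of_le_one hrpos.le hr1.le (by omega)
  -- Bernoulli: 1 - r^N ≤ N (1 - r)
  have hBer : 1 + (N:ℝ) * (r - 1) ≤ (1 + (r - 1)) ^ N := one_add_mul_le_pow (by linarith) N
  have hNr : 1 - r ^ N ≤ (N:ℝ) * (1 - r) := by
    have : (1 + (r - 1)) ^ N = r ^ N := by ring_nf
    nlinarith
  have hkey : τ * (r - r ^ N) - r < 0 := by
    have h1 : τ * (r - r ^ N) ≤ |τ| * (r - r ^ N) :=
      mul_le_mul_of_nonneg_right (le_abs_self τ) (by linarith)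
    have h2 : |τ| * (r - r ^ N) ≤ c * (1 - r) := by
      have hτ : |τ| ≤ |τ| + 1 := by linarith
      have h3 : r - r ^ N ≤ (N:ℝ) * (1 - r) := by nlinarith
      have := abs_nonneg τ
      have hNn : (0:ℝ) ≤ (N:ℝ) * (1 - r) := by positivity
      calc |τ| * (r - r ^ N) ≤ |τ| * ((N:ℝ) * (1 - r)) :=
            mul_le_mul_of_nonneg_left h3 (abs_nonneg τ)
        _ ≤ (|τ| + 1) * ((N:ℝ) * (1 - r)) := mul_le_mul_of_nonneg_right hτ hNn
        _ = c * (1 - r) := by rw [hc]; ring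
    have h4 : c * (1 - r) < 1/2 := by
      have : 1 - r < 1/(2*c) := by linarith
      calc c * (1 - r) < c * (1/(2*c)) := by
            exact mul_lt_mul_of_pos_left this hc0
        _ = 1/2 := by field_simp
    linarith
  simp only [hθval] at *
  -- goal is an inequality in reals
  have hg1 : ((1 - r) * H * (1 - r) ^ (-α) - (r + τ * (1 - r)) * F * (1 - r) ^ (β - 1)) -
      ((1 - r + r * θr) * H * (1 - r) ^ (-α) - τ * (1 - r ^ N) * F * (1 - r) ^ (β - 1)) ≤ 0 := by
    have e : ((1 - r) * H * (1 - r) ^ (-α) - (r + τ * (1 - r)) * F * (1 - r) ^ (β - 1)) -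
        ((1 - r + r * θr) * H * (1 - r) ^ (-α) - τ * (1 - r ^ N) * F * (1 - r) ^ (β - 1))
        = -(r * θr * H) * (1 - r) ^ (-α) + (τ * (r - r ^ N) - r) * (F * (1 - r) ^ (β - 1)) := by
      ring
    rw [e]
    have t1 : -(r * θr * H) * (1 - r) ^ (-α) ≤ 0 := by
      have : 0 ≤ r * θr * H := by positivity
      nlinarith
    have t2 : (τ * (r - r ^ N) - r) * (F * (1 - r) ^ (β - 1)) ≤ 0 := by
      apply mul_nonpos_of_nonpos_of_nonneg hkey.le (by positivity)
    linarith
  nlinarith [hg1]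
end
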